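/- Let (A_n)_{n≥1} be a sequence of nonnegative d×d real matrices such that P_n ≠ 0 for every n. Suppose there exist a strictly increasing sequence of positive integers (n_k)_{k≥1} and a matrix P^{(s)} such that P_{n_k}/‖P_{n_k}‖ → P^{(s)} as k → ∞, and: (H1) the infimum of ‖P_n‖/(‖P_{n_k}‖·‖P_{n_k,n}‖) over all k ≥ 1 and all n with n_{k+1} ≤ n < n_{k+2} is positive; (H2) for every subsequential limit R of the sequence k ↦ P_{n_k,n_{k+1}}/‖P_{n_k,n_{k+1}}‖, there are no indices i ≠ i' and j ≠ j' such that R_{i,j}·R_{i',j'} ≠ 0 while R_{i,j'} = R_{i',j} = 0. Then there exists a vector L ∈ ℝ^d such that for every vector c in V_A := {v ∈ ℝ^d : v has nonnegative entries and inf_n ‖P_n v‖/‖P_n‖ > 0} (a set which contains every vector with all entries positive), the sequence n ↦ P_n c/‖P_n c‖ converges to L; in particular the limit does not depend on c. -/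

import Mathlib

open Filter Matrix

/-- `‖X‖`: sum of the absolute values of the entries of a real matrix. -/
noncomputable def matEntrySumNorm {d : ℕ} (M : Matrix (Fin d) (Fin d) ℝ) : ℝ :=
  ∑ i, ∑ j, |M i j|

/-- `‖v‖`: sum of the absolute values of the entries of a real vector. -/
noncomputable def vecEntrySumNorm {d : ℕ} (v : Fin d → ℝ) : ℝ :=
  ∑ i, |v i|

/-- `P_{m,n} = A_{m+1} ⋯ A_n` (ordered product); `P_{n,n} = I`. -/
def matProd {d : ℕ} (A : ℕ → Matrix (Fin d) (Fin d) ℝ) (m n : ℕ) :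
    Matrix (Fin d) (Fin d) ℝ :=
  ((List.range (n - m)).map fun i => A (m + 1 + i)).prod

namespace Aux
variable {d : ℕ}

lemma listProd_nonneg : ∀ (L : List (Matrix (Fin d) (Fin d) ℝ)),
    (∀ M ∈ L, ∀ i j, 0 ≤ M i j) → ∀ i j, 0 ≤ L.prod i j := by
  intro L
  induction L with
  | nil =>
    intro _ i j
    simp only [List.prod_nil]
    by_cases h : i = j <;> simp [Matrix.one_apply, h]
  | cons M T ih =>
    intro h i j
    simp only [List.prod_cons, Matrix.mul_apply]
    refine Finset.sum_nonneg fun k _ => mul_nonneg (h M (by simp) i k) (ih (fun N hN => h N (by simp [hN])) k j)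

lemma matProd_nonneg (A : ℕ → Matrix (Fin d) (Fin d) ℝ) (hA : ∀ n i j, 0 ≤ A n i j)
    (m n : ℕ) : ∀ i j, 0 ≤ matProd A m n i j := by
  apply listProd_nonneg
  intro M hM i j
  simp only [List.mem_map] at hM
  obtain ⟨a, -, rfl⟩ := hM
  exact hA _ i j

lemma matProd_mul (A : ℕ → Matrix (Fin d) (Fin d) ℝ) {a b c : ℕ} (hab : a ≤ b) (hbc : b ≤ c) :
    matProd A a b * matProd A b c = matProd A a c := by
  unfold matProd
  rw [← List.prod_append]
  congr 1
  have h1 : c - a = (b - a) + (c - b) := by omega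
  rw [h1, List.range_add, List.map_append, List.map_map]
  congr 1
  apply List.map_congr_left
  intro x hx
  simp only [Function.comp_apply, List.mem_range] at hx ⊢
  have hx2 : a + 1 + (b - a + x) = b + 1 + x := by omega
  rw [hx2]


lemma esn_nonneg (M : Matrix (Fin d) (Fin d) ℝ) : 0 ≤ matEntrySumNorm M :=
  Finset.sum_nonneg fun i _ => Finset.sum_nonneg fun j _ => abs_nonneg _

lemma vsn_nonneg (v : Fin d → ℝ) : 0 ≤ vecEntrySumNorm v :=
  Finset.sum_nonneg fun i _ => abs_nonneg _

lemma entry_le_esn (M : Matrix (Fin d) (Fin d) ℝ) (i j : Fin d) : |M i j| ≤ matEntrySumNorm M := by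
  calc |M i j| ≤ ∑ j', |M i j'| :=
        Finset.single_le_sum (fun j' _ => abs_nonneg (M i j')) (Finset.mem_univ j)
    _ ≤ matEntrySumNorm M :=
        Finset.single_le_sum (fun i' (_ : i' ∈ Finset.univ) =>
          Finset.sum_nonneg fun j' _ => abs_nonneg (M i' j')) (Finset.mem_univ i)

lemma esn_pos {M : Matrix (Fin d) (Fin d) ℝ} (h : M ≠ 0) : 0 < matEntrySumNorm M := by
  obtain ⟨i, j, hij⟩ : ∃ i j, M i j ≠ 0 := by
    by_contra hc
    push_neg at hc
    exact h (by ext i j; exact hc i j)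
  calc (0:ℝ) < |M i j| := abs_pos.mpr hij
    _ ≤ matEntrySumNorm M := entry_le_esn M i j

lemma vsn_eq_zero {v : Fin d → ℝ} (h : vecEntrySumNorm v = 0) : v = 0 := by
  funext i
  have h2 := (Finset.sum_eq_zero_iff_of_nonneg (fun i _ => abs_nonneg (v i))).mp h i (Finset.mem_univ i)
  exact abs_eq_zero.mp h2

lemma vsn_pos {v : Fin d → ℝ} (h : v ≠ 0) : 0 < vecEntrySumNorm v :=
  lt_of_le_of_ne (vsn_nonneg v) fun hc => h (vsn_eq_zero hc.symm)

lemma esn_smul (s : ℝ) (M : Matrix (Fin d) (Fin d) ℝ) :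
    matEntrySumNorm (s • M) = |s| * matEntrySumNorm M := by
  simp only [matEntrySumNorm, Matrix.smul_apply, smul_eq_mul, abs_mul, ← Finset.mul_sum]

lemma vsn_smul (s : ℝ) (v : Fin d → ℝ) :
    vecEntrySumNorm (s • v) = |s| * vecEntrySumNorm v := by
  simp only [vecEntrySumNorm, Pi.smul_apply, smul_eq_mul, abs_mul, ← Finset.mul_sum]

lemma esn_mul_le (M N : Matrix (Fin d) (Fin d) ℝ) :
    matEntrySumNorm (M * N) ≤ matEntrySumNorm M * matEntrySumNorm N := by
  unfold matEntrySumNorm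
  calc ∑ i, ∑ j, |(M * N) i j|
      ≤ ∑ i, ∑ j, ∑ k, |M i k| * |N k j| := by
        refine Finset.sum_le_sum fun i _ => Finset.sum_le_sum fun j _ => ?_
        rw [Matrix.mul_apply]
        refine le_trans (Finset.abs_sum_le_sum_abs _ _) ?_
        exact Finset.sum_le_sum fun k _ => le_of_eq (abs_mul _ _)
    _ = ∑ i, ∑ k, |M i k| * (∑ j, |N k j|) := by
        refine Finset.sum_congr rfl fun i _ => ?_
        rw [Finset.sum_comm]
        exact Finset.sum_congr rfl fun k _ => (Finset.mul_sum _ _ _).symm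
    _ ≤ ∑ i, ∑ k, |M i k| * (∑ k', ∑ j, |N k' j|) := by
        apply Finset.sum_le_sum
        intro i _
        apply Finset.sum_le_sum
        intro k _
        refine mul_le_mul_of_nonneg_left ?_ (abs_nonneg _)
        exact Finset.single_le_sum (f := fun k' => ∑ j, |N k' j|)
          (fun k' _ => Finset.sum_nonneg fun j _ => abs_nonneg _) (Finset.mem_univ k)
    _ = (∑ i, ∑ k, |M i k|) * (∑ k', ∑ j, |N k' j|) := by
        rw [Finset.sum_mul]
        exact Finset.sum_congr rfl fun i _ => (Finset.sum_mul _ _ _).symm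

lemma vsn_mulVec_le (M : Matrix (Fin d) (Fin d) ℝ) (v : Fin d → ℝ) :
    vecEntrySumNorm (M *ᵥ v) ≤ matEntrySumNorm M * vecEntrySumNorm v := by
  unfold vecEntrySumNorm matEntrySumNorm
  calc ∑ i, |(M *ᵥ v) i|
      ≤ ∑ i, ∑ j, |M i j| * |v j| := by
        refine Finset.sum_le_sum fun i _ => ?_
        show |∑ j, M i j * v j| ≤ _
        refine le_trans (Finset.abs_sum_le_sum_abs _ _) ?_
        exact Finset.sum_le_sum fun j _ => le_of_eq (abs_mul _ _)
    _ ≤ ∑ i, ∑ j, |M i j| * (∑ j', |v j'|) := by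
        apply Finset.sum_le_sum
        intro i _
        apply Finset.sum_le_sum
        intro j _
        refine mul_le_mul_of_nonneg_left ?_ (abs_nonneg _)
        exact Finset.single_le_sum (f := fun j' => |v j'|)
          (fun j' _ => abs_nonneg _) (Finset.mem_univ j)
    _ = (∑ i, ∑ j, |M i j|) * (∑ j', |v j'|) := by
        rw [Finset.sum_mul]
        exact Finset.sum_congr rfl fun i _ => (Finset.sum_mul _ _ _).symm

lemma entry_le_vsn (v : Fin d → ℝ) (i : Fin d) : |v i| ≤ vecEntrySumNorm v :=
  Finset.single_le_sum (f := fun i' => |v i'|) (fun i' _ => abs_nonneg _) (Finset.mem_univ i)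

lemma vsn_add_le (a b : Fin d → ℝ) : vecEntrySumNorm (a + b) ≤ vecEntrySumNorm a + vecEntrySumNorm b := by
  unfold vecEntrySumNorm
  rw [← Finset.sum_add_distrib]
  exact Finset.sum_le_sum fun i _ => abs_add_le _ _

lemma vsn_sub_le (a b : Fin d → ℝ) : vecEntrySumNorm a - vecEntrySumNorm b ≤ vecEntrySumNorm (a - b) := by
  unfold vecEntrySumNorm
  rw [← Finset.sum_sub_distrib]
  exact Finset.sum_le_sum fun i _ => abs_sub_abs_le_abs_sub _ _


lemma normalized_smul {s : ℝ} (hs : 0 < s) (x : Fin d → ℝ) :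
    (vecEntrySumNorm (s • x))⁻¹ • (s • x) = (vecEntrySumNorm x)⁻¹ • x := by
  rw [vsn_smul, abs_of_pos hs, smul_smul, _root_.mul_inv_rev, mul_assoc, inv_mul_cancel₀ (ne_of_gt hs), mul_one]

lemma ratio_bound (a b : Fin d → ℝ) (ha : 0 < vecEntrySumNorm a) (hb : 0 < vecEntrySumNorm b) :
    vecEntrySumNorm ((vecEntrySumNorm a)⁻¹ • a - (vecEntrySumNorm b)⁻¹ • b)
      ≤ 2 * vecEntrySumNorm (a - b) / vecEntrySumNorm a := by
  set α := vecEntrySumNorm a with hα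
  set β := vecEntrySumNorm b with hβ
  have key : α⁻¹ • a - β⁻¹ • b = α⁻¹ • (a - b) + (α⁻¹ - β⁻¹) • b := by
    rw [smul_sub, sub_smul]; abel
  rw [key]
  refine le_trans (vsn_add_le _ _) ?_
  rw [vsn_smul, vsn_smul, abs_of_pos (inv_pos.mpr ha)]
  have h1 : |α⁻¹ - β⁻¹| * β ≤ α⁻¹ * vecEntrySumNorm (a - b) := by
    have h2 : α⁻¹ - β⁻¹ = (β - α) * (α⁻¹ * β⁻¹) := by
      field_simp
    rw [h2, abs_mul, abs_of_pos (mul_pos (inv_pos.mpr ha) (inv_pos.mpr hb))]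
    have h3 : |β - α| ≤ vecEntrySumNorm (a - b) := by
      rw [abs_le]
      constructor
      · have := vsn_sub_le a b
        nlinarith [this]
      · have := vsn_sub_le b a
        have he : vecEntrySumNorm (b - a) = vecEntrySumNorm (a - b) := by
          have : b - a = (-1 : ℝ) • (a - b) := by ext i; simp
          rw [this, vsn_smul]; norm_num
        nlinarith [this, he]
    calc |β - α| * (α⁻¹ * β⁻¹) * β ≤ vecEntrySumNorm (a - b) * (α⁻¹ * β⁻¹) * β := by
          have : (0:ℝ) ≤ (α⁻¹ * β⁻¹) * β := by positivity
          nlinarith [h3, this]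
      _ = α⁻¹ * vecEntrySumNorm (a - b) := by field_simp
  calc α⁻¹ * vecEntrySumNorm (a - b) + |α⁻¹ - β⁻¹| * β
      ≤ α⁻¹ * vecEntrySumNorm (a - b) + α⁻¹ * vecEntrySumNorm (a - b) := by linarith
    _ = 2 * vecEntrySumNorm (a - b) / α := by field_simp; ring


lemma eigen_unique (B : Matrix (Fin d) (Fin d) ℝ) (hB : ∀ i j, 0 ≤ B i j)
    (hchain : ¬ ∃ i i' : Fin d, ∃ j j' : Fin d, i ≠ i' ∧ j ≠ j' ∧
        B i j * B i' j' ≠ 0 ∧ B i j' = 0 ∧ B i' j = 0)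
    {μ : ℝ} (hμ : 0 < μ) (p q : Fin d → ℝ)
    (hp : ∀ i, 0 ≤ p i) (hq : ∀ i, 0 ≤ q i) (hp0 : p ≠ 0) (hq0 : q ≠ 0)
    (hpe : ∀ j, ∑ i, p i * B i j = μ * p j) (hqe : ∀ j, ∑ i, q i * B i j = μ * q j) :
    ∃ t : ℝ, 0 < t ∧ q = t • p := by
  -- support is forward-closed
  have hclosed : ∀ (r : Fin d → ℝ), (∀ i, 0 ≤ r i) → (∀ j, ∑ i, r i * B i j = μ * r j) →
      ∀ i j, 0 < r i → 0 < B i j → 0 < r j := by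
    intro r hr hre i j hri hBij
    have hsum : r i * B i j ≤ ∑ i', r i' * B i' j :=
      Finset.single_le_sum (f := fun i' => r i' * B i' j)
        (fun i' _ => mul_nonneg (hr i') (hB i' j)) (Finset.mem_univ i)
    have h1 : 0 < μ * r j := lt_of_lt_of_le (mul_pos hri hBij) (le_of_le_of_eq hsum (hre j))
    nlinarith [hr j]
  -- a positive coordinate receives from a positive coordinate
  have hrecv : ∀ (r : Fin d → ℝ), (∀ i, 0 ≤ r i) → (∀ j, ∑ i, r i * B i j = μ * r j) →
      ∀ j, 0 < r j → ∃ i, 0 < r i ∧ 0 < B i j := by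
    intro r hr hre j hrj
    by_contra hcon
    push_neg at hcon
    have hz : ∑ i, r i * B i j = 0 := by
      refine Finset.sum_eq_zero fun i _ => ?_
      rcases eq_or_lt_of_le (hr i) with h | h
      · rw [← h, zero_mul]
      · rw [le_antisymm (hcon i h) (hB i j), mul_zero]
    rw [hre j] at hz
    nlinarith [mul_pos hμ hrj]
  -- key contradiction: support of one cannot escape support of the other
  have stepB : ∀ (r s : Fin d → ℝ), (∀ i, 0 ≤ r i) → (∀ i, 0 ≤ s i) →
      (∀ j, ∑ i, r i * B i j = μ * r j) → (∀ j, ∑ i, s i * B i j = μ * s j) →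
      (∃ j, 0 < r j) → ∀ j', 0 < s j' → r j' = 0 → False := by
    intro r s hr hs hre hse hex j' hsj' hrj'
    obtain ⟨i1, hsi1, hBi1⟩ := hrecv s hs hse j' hsj'
    have hri1 : r i1 = 0 := by
      by_contra h
      have : 0 < r i1 := lt_of_le_of_ne (hr i1) (Ne.symm h)
      have := hclosed r hr hre i1 j' this hBi1
      rw [hrj'] at this; exact lt_irrefl 0 this
    have rowfull : ∀ j0, 0 < r j0 → 0 < B i1 j0 := by
      intro j0 hrj0
      obtain ⟨i0, hri0, hBi0⟩ := hrecv r hr hre j0 hrj0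
      have hii : i0 ≠ i1 := by
        intro h; rw [h, hri1] at hri0; exact lt_irrefl 0 hri0
      have hjj : j0 ≠ j' := by
        intro h; rw [h, hrj'] at hrj0; exact lt_irrefl 0 hrj0
      have hB0 : B i0 j' = 0 := by
        by_contra h
        have := hclosed r hr hre i0 j' hri0 (lt_of_le_of_ne (hB i0 j') (Ne.symm h))
        rw [hrj'] at this; exact lt_irrefl 0 this
      by_contra h
      have hB1 : B i1 j0 = 0 := le_antisymm (not_lt.mp h) (hB i1 j0)
      exact hchain ⟨i0, i1, j0, j', hii, hjj, mul_ne_zero (ne_of_gt hBi0) (ne_of_gt hBi1), hB0, hB1⟩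
    -- minimal ratio over support of r
    obtain ⟨jw, hjw⟩ := hex
    have hFne : (Finset.univ.filter fun j => 0 < r j).Nonempty :=
      ⟨jw, Finset.mem_filter.mpr ⟨Finset.mem_univ jw, hjw⟩⟩
    obtain ⟨jd, hjdF, hmin⟩ := Finset.exists_min_image _ (fun j => s j / r j) hFne
    have hrjd : 0 < r jd := (Finset.mem_filter.mp hjdF).2
    set t := s jd / r jd with ht
    have hge : ∀ i, t * r i ≤ s i := by
      intro i
      rcases eq_or_lt_of_le (hr i) with h | h
      · rw [← h, mul_zero]; exact hs i
      · have := hmin i (Finset.mem_filter.mpr ⟨Finset.mem_univ i, h⟩)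
        rw [ht, div_le_div_iff₀ hrjd h] at this
        have htr : t * r jd = s jd := div_mul_cancel₀ (s jd) (ne_of_gt hrjd)
        nlinarith [this, htr, hrjd, h]
    have hstrict : ∑ i, (t * r i) * B i jd < ∑ i, s i * B i jd := by
      refine Finset.sum_lt_sum (fun i _ => mul_le_mul_of_nonneg_right (hge i) (hB i jd)) ?_
      refine ⟨i1, Finset.mem_univ i1, ?_⟩
      rw [hri1, mul_zero, zero_mul]
      exact mul_pos hsi1 (rowfull jd hrjd)
    have hts : ∑ i, (t * r i) * B i jd = t * (μ * r jd) := by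
      rw [← hre jd, Finset.mul_sum]
      exact Finset.sum_congr rfl fun i _ => mul_assoc t (r i) (B i jd)
    have htr : t * r jd = s jd := div_mul_cancel₀ (s jd) (ne_of_gt hrjd)
    rw [hts, hse jd] at hstrict
    nlinarith [hstrict, htr]
  -- supports coincide
  have hexp : ∃ j, 0 < p j := by
    by_contra h
    push_neg at h
    exact hp0 (funext fun j => le_antisymm (h j) (hp j))
  have hsupp_pq : ∀ j, 0 < p j → 0 < q j := by
    intro j hpj
    rcases eq_or_lt_of_le (hq j) with h | h
    · exact absurd (stepB q p hq hp hqe hpe (by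
        by_contra hc
        push_neg at hc
        exact hq0 (funext fun j' => le_antisymm (hc j') (hq j'))) j hpj h.symm) (fun f => f)
    · exact h
  have hsupp_qp : ∀ j, 0 < q j → 0 < p j := by
    intro j hqj
    rcases eq_or_lt_of_le (hp j) with h | h
    · exact absurd (stepB p q hp hq hpe hqe hexp j hqj h.symm) (fun f => f)
    · exact h
  -- minimal ratio, subtract
  obtain ⟨jw, hjw⟩ := hexp
  have hFne : (Finset.univ.filter fun j => 0 < p j).Nonempty :=
    ⟨jw, Finset.mem_filter.mpr ⟨Finset.mem_univ jw, hjw⟩⟩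
  obtain ⟨jd, hjdF, hmin⟩ := Finset.exists_min_image _ (fun j => q j / p j) hFne
  have hpjd : 0 < p jd := (Finset.mem_filter.mp hjdF).2
  set t := q jd / p jd with ht
  have htpos : 0 < t := div_pos (hsupp_pq jd hpjd) hpjd
  have hge : ∀ i, t * p i ≤ q i := by
    intro i
    rcases eq_or_lt_of_le (hp i) with h | h
    · rw [← h, mul_zero]; exact hq i
    · have := hmin i (Finset.mem_filter.mpr ⟨Finset.mem_univ i, h⟩)
      rw [ht, div_le_div_iff₀ hpjd h] at this
      have htr : t * p jd = q jd := div_mul_cancel₀ (q jd) (ne_of_gt hpjd)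
      nlinarith [this, htr, hpjd, h]
  set r : Fin d → ℝ := q - t • p with hrdef
  have hrval : ∀ i, r i = q i - t * p i := fun i => rfl
  have hrnn : ∀ i, 0 ≤ r i := fun i => by rw [hrval]; linarith [hge i]
  have hre : ∀ j, ∑ i, r i * B i j = μ * r j := by
    intro j
    have : ∑ i, r i * B i j = (∑ i, q i * B i j) - t * ∑ i, p i * B i j := by
      rw [Finset.mul_sum, ← Finset.sum_sub_distrib]
      refine Finset.sum_congr rfl fun i _ => ?_
      rw [hrval]; ring
    rw [this, hqe j, hpe j, hrval]; ring
  have hrjd : r jd = 0 := by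
    rw [hrval, ht, div_mul_cancel₀ (q jd) (ne_of_gt hpjd)]; ring
  by_cases hr0 : r = 0
  · refine ⟨t, htpos, ?_⟩
    funext i
    have : r i = 0 := by rw [hr0]; rfl
    rw [hrval] at this
    have : q i = t * p i := by linarith
    rw [this]; rfl
  · exfalso
    have hexr : ∃ j, 0 < r j := by
      by_contra h
      push_neg at h
      exact hr0 (funext fun j => le_antisymm (h j) (hrnn j))
    exact stepB r p hrnn hp hre hpe hexr jd hpjd hrjd

end Aux

set_option maxHeartbeats 1600000

/-- Theorem 1.5: under hypotheses (H1) and (H2) on a convergent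
subsequence of the normalized left-products of nonnegative matrices, the sequence
`n ↦ P_n c / ‖P_n c‖` converges, for every `c` in `V_A` (a set containing all positive
vectors), to a limit `L` not depending on `c`. -/
theorem normalized_image_converges_of_H1_H2 {d : ℕ}
    (A : ℕ → Matrix (Fin d) (Fin d) ℝ)
    (hA : ∀ n i j, 0 ≤ A n i j)
    (hP : ∀ n, matProd A 0 n ≠ 0)
    (nk : ℕ → ℕ) (hnk : StrictMono nk) (hnk0 : 0 < nk 0)
    (Ps : Matrix (Fin d) (Fin d) ℝ)
    (hPs : Tendsto (fun k => (matEntrySumNorm (matProd A 0 (nk k)))⁻¹ • matProd A 0 (nk k))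
      atTop (nhds Ps))
    (H1 : ∃ ε > (0 : ℝ), ∀ k n, nk (k + 1) ≤ n → n < nk (k + 2) →
      ε ≤ matEntrySumNorm (matProd A 0 n) /
        (matEntrySumNorm (matProd A 0 (nk k)) * matEntrySumNorm (matProd A (nk k) n)))
    (H2 : ∀ R : Matrix (Fin d) (Fin d) ℝ,
      (∃ φ : ℕ → ℕ, StrictMono φ ∧
        Tendsto (fun k => (matEntrySumNorm (matProd A (nk (φ k)) (nk (φ k + 1))))⁻¹ •
          matProd A (nk (φ k)) (nk (φ k + 1))) atTop (nhds R)) →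
      ¬ ∃ i i' : Fin d, ∃ j j' : Fin d, i ≠ i' ∧ j ≠ j' ∧
        R i j * R i' j' ≠ 0 ∧ R i j' = 0 ∧ R i' j = 0) :
    (∀ v : Fin d → ℝ, (∀ i, 0 < v i) →
      ∃ ε > (0 : ℝ), ∀ n,
        ε ≤ vecEntrySumNorm (matProd A 0 n *ᵥ v) / matEntrySumNorm (matProd A 0 n)) ∧
    ∃ L : Fin d → ℝ, ∀ c : Fin d → ℝ, (∀ i, 0 ≤ c i) →
      (∃ ε > (0 : ℝ), ∀ n,
        ε ≤ vecEntrySumNorm (matProd A 0 n *ᵥ c) / matEntrySumNorm (matProd A 0 n)) →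
      Tendsto (fun n => (vecEntrySumNorm (matProd A 0 n *ᵥ c))⁻¹ • (matProd A 0 n *ᵥ c))
        atTop (nhds L) := by
  rcases Nat.eq_zero_or_pos d with hd0 | hd
  · exfalso
    apply hP 0
    subst hd0
    ext i j
    exact i.elim0
  obtain ⟨ε, hε, hH1⟩ := H1
  have hNpos : ∀ n, 0 < matEntrySumNorm (matProd A 0 n) := fun n => Aux.esn_pos (hP n)
  -- entries of products are nonnegative
  have hPnn : ∀ m n, ∀ i j, (0:ℝ) ≤ matProd A m n i j := fun m n => Aux.matProd_nonneg A hA m n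
  constructor
  · -- Part 1
    intro v hv
    have hune : (Finset.univ : Finset (Fin d)).Nonempty := ⟨⟨0, hd⟩, Finset.mem_univ _⟩
    have hmpos : 0 < Finset.univ.inf' hune v := by
      obtain ⟨i, -, hi⟩ := Finset.exists_mem_eq_inf' hune v
      rw [hi]
      exact hv i
    refine ⟨Finset.univ.inf' hune v, hmpos, fun n => ?_⟩
    rw [le_div_iff₀ (hNpos n)]
    calc Finset.univ.inf' hune v * matEntrySumNorm (matProd A 0 n)
        ≤ vecEntrySumNorm (matProd A 0 n *ᵥ v) := by
          unfold matEntrySumNorm vecEntrySumNorm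
          rw [Finset.mul_sum]
          apply Finset.sum_le_sum
          intro i _
          have habs : |(matProd A 0 n *ᵥ v) i| = ∑ j, matProd A 0 n i j * v j := by
            have h1 : (matProd A 0 n *ᵥ v) i = ∑ j, matProd A 0 n i j * v j := rfl
            rw [h1, abs_of_nonneg (Finset.sum_nonneg fun j _ =>
              mul_nonneg (hPnn 0 n i j) (le_of_lt (hv j)))]
          rw [habs, Finset.mul_sum]
          apply Finset.sum_le_sum
          intro j _
          rw [abs_of_nonneg (hPnn 0 n i j)]
          calc Finset.univ.inf' hune v * matProd A 0 n i j
              = matProd A 0 n i j * Finset.univ.inf' hune v := mul_comm _ _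
            _ ≤ matProd A 0 n i j * v j :=
                mul_le_mul_of_nonneg_left (Finset.inf'_le v (Finset.mem_univ j)) (hPnn 0 n i j)
      _ = vecEntrySumNorm (matProd A 0 n *ᵥ v) := rfl
  · -- Part 2
    have hnkle : ∀ k, nk k ≤ nk (k+1) := fun k => (hnk (Nat.lt_succ_self k)).le
    -- norms of partial blocks are positive
    have hBpos : ∀ k n, nk k ≤ n → 0 < matEntrySumNorm (matProd A (nk k) n) := by
      intro k n hkn
      have hsub : matEntrySumNorm (matProd A 0 n) ≤
          matEntrySumNorm (matProd A 0 (nk k)) * matEntrySumNorm (matProd A (nk k) n) := by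
        rw [← Aux.matProd_mul A (Nat.zero_le (nk k)) hkn]
        exact Aux.esn_mul_le _ _
      nlinarith [hNpos n, hNpos (nk k), Aux.esn_nonneg (matProd A (nk k) n)]
    -- entrywise convergence of the normalized products
    have hQe : ∀ i j, Tendsto
        (fun k => ((matEntrySumNorm (matProd A 0 (nk k)))⁻¹ • matProd A 0 (nk k)) i j)
        atTop (nhds (Ps i j)) := by
      have h' : Tendsto (fun k => (((matEntrySumNorm (matProd A 0 (nk k)))⁻¹ • matProd A 0 (nk k)) :
          Fin d → Fin d → ℝ)) atTop (nhds (Ps : Fin d → Fin d → ℝ)) := hPs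
      intro i j
      exact tendsto_pi_nhds.mp (tendsto_pi_nhds.mp h' i) j
    have hQnn : ∀ k i j, (0:ℝ) ≤ ((matEntrySumNorm (matProd A 0 (nk k)))⁻¹ • matProd A 0 (nk k)) i j := by
      intro k i j
      have : ((matEntrySumNorm (matProd A 0 (nk k)))⁻¹ • matProd A 0 (nk k)) i j
          = (matEntrySumNorm (matProd A 0 (nk k)))⁻¹ * matProd A 0 (nk k) i j := rfl
      rw [this]
      exact mul_nonneg (inv_nonneg.mpr (hNpos _).le) (hPnn _ _ i j)
    have hPsnn : ∀ i j, 0 ≤ Ps i j := fun i j => ge_of_tendsto' (hQe i j) (fun k => hQnn k i j)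
    -- the norm of Ps is 1
    have hesnQ : ∀ k, matEntrySumNorm ((matEntrySumNorm (matProd A 0 (nk k)))⁻¹ • matProd A 0 (nk k)) = 1 := by
      intro k
      rw [Aux.esn_smul, abs_of_pos (inv_pos.mpr (hNpos (nk k))), inv_mul_cancel₀ (ne_of_gt (hNpos (nk k)))]
    have hesnPs : matEntrySumNorm Ps = 1 := by
      have h1 : Tendsto (fun k => matEntrySumNorm
          ((matEntrySumNorm (matProd A 0 (nk k)))⁻¹ • matProd A 0 (nk k))) atTop (nhds (matEntrySumNorm Ps)) := by
        unfold matEntrySumNorm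
        exact tendsto_finset_sum _ fun i _ => tendsto_finset_sum _ fun j _ => (hQe i j).abs
      have h2 : Tendsto (fun _ : ℕ => (1:ℝ)) atTop (nhds 1) := tendsto_const_nhds
      exact tendsto_nhds_unique (by simpa [hesnQ] using h1) h2
    have hPs0 : Ps ≠ 0 := by
      intro h
      rw [h] at hesnPs
      simp [matEntrySumNorm] at hesnPs
    -- blocks
    set blk : ℕ → Matrix (Fin d) (Fin d) ℝ := fun k => matProd A (nk k) (nk (k+1)) with hblk
    set bn : ℕ → ℝ := fun k => matEntrySumNorm (blk k) with hbn
    have hbnpos : ∀ k, 0 < bn k := fun k => hBpos k (nk (k+1)) (hnkle k)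
    set Rm : ℕ → Matrix (Fin d) (Fin d) ℝ := fun k => (bn k)⁻¹ • blk k with hRm
    set lam : ℕ → ℝ := fun k =>
      matEntrySumNorm (matProd A 0 (nk (k+1))) / (matEntrySumNorm (matProd A 0 (nk k)) * bn k) with hlam
    have hRmnn : ∀ k i j, (0:ℝ) ≤ Rm k i j := by
      intro k i j
      have : Rm k i j = (bn k)⁻¹ * blk k i j := rfl
      rw [this]
      exact mul_nonneg (inv_nonneg.mpr (hbnpos k).le) (hPnn _ _ i j)
    have hRmle : ∀ k i j, Rm k i j ≤ 1 := by
      intro k i j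
      have h1 : Rm k i j = (bn k)⁻¹ * blk k i j := rfl
      have h2 : blk k i j ≤ bn k := by
        have := Aux.entry_le_esn (blk k) i j
        rw [abs_of_nonneg (hPnn _ _ i j)] at this
        exact this
      rw [h1]
      calc (bn k)⁻¹ * blk k i j ≤ (bn k)⁻¹ * bn k :=
            mul_le_mul_of_nonneg_left h2 (inv_nonneg.mpr (hbnpos k).le)
        _ = 1 := inv_mul_cancel₀ (ne_of_gt (hbnpos k))
    have hlam_mem : ∀ k, lam k ∈ Set.Icc ε 1 := by
      intro k
      constructor
      · exact hH1 k (nk (k+1)) le_rfl (hnk (Nat.lt_succ_self (k+1)))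
      · rw [hlam]
        rw [div_le_one (mul_pos (hNpos (nk k)) (hbnpos k))]
        rw [← Aux.matProd_mul A (Nat.zero_le (nk k)) (hnkle k)]
        exact Aux.esn_mul_le _ _
    -- extraction of a convergent subsequence
    have hmem : ∀ k, ((fun i j => Rm k i j, lam k) : (Fin d → Fin d → ℝ) × ℝ) ∈
        (Metric.closedBall (0 : Fin d → Fin d → ℝ) 1) ×ˢ (Set.Icc ε 1) := by
      intro k
      constructor
      · rw [Metric.mem_closedBall, dist_zero_right]
        rw [pi_norm_le_iff_of_nonneg (by norm_num : (0:ℝ) ≤ 1)]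
        intro i
        rw [pi_norm_le_iff_of_nonneg (by norm_num : (0:ℝ) ≤ 1)]
        intro j
        rw [Real.norm_eq_abs, abs_of_nonneg (hRmnn k i j)]
        exact hRmle k i j
      · exact hlam_mem k
    obtain ⟨⟨Rl, laml⟩, hmem2, φ, hφ, hconv⟩ :=
      ((isCompact_closedBall (0 : Fin d → Fin d → ℝ) 1).prod isCompact_Icc).tendsto_subseq hmem
    have hlaml : ε ≤ laml := hmem2.2.1
    have hlamlpos : 0 < laml := lt_of_lt_of_le hε hlaml
    have hφtop : Tendsto φ atTop atTop := hφ.tendsto_atTop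
    have hRconv : Tendsto (fun k => (fun i j => Rm (φ k) i j : Fin d → Fin d → ℝ)) atTop (nhds Rl) :=
      ((continuous_fst.tendsto _).comp hconv)
    have hlamconv : Tendsto (fun k => lam (φ k)) atTop (nhds laml) :=
      ((continuous_snd.tendsto _).comp hconv)
    have hRe : ∀ i j, Tendsto (fun k => Rm (φ k) i j) atTop (nhds (Rl i j)) := by
      intro i j
      exact tendsto_pi_nhds.mp (tendsto_pi_nhds.mp hRconv i) j
    have hRlnn : ∀ i j, 0 ≤ Rl i j := fun i j => ge_of_tendsto' (hRe i j) (fun k => hRmnn (φ k) i j)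
    -- H2 applies to Rl
    have hchainR := H2 (Matrix.of Rl) ⟨φ, hφ, by
      have : Tendsto (fun k => ((matEntrySumNorm (matProd A (nk (φ k)) (nk (φ k + 1))))⁻¹ •
          matProd A (nk (φ k)) (nk (φ k + 1)) : Fin d → Fin d → ℝ)) atTop (nhds Rl) := hRconv
      exact this⟩
    -- the multiplicative relation between consecutive normalized products
    have hQR : ∀ k, ((matEntrySumNorm (matProd A 0 (nk k)))⁻¹ • matProd A 0 (nk k)) * Rm k
        = lam k • ((matEntrySumNorm (matProd A 0 (nk (k+1))))⁻¹ • matProd A 0 (nk (k+1))) := by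
      intro k
      rw [hRm]
      rw [smul_mul_assoc, Matrix.mul_smul, smul_smul, smul_smul]
      rw [Aux.matProd_mul A (Nat.zero_le (nk k)) (hnkle k)]
      congr 1
      rw [hlam]
      field_simp
      rw [div_eq_div_iff (ne_of_gt (mul_pos (hNpos (nk k)) (hbnpos k)))
        (ne_of_gt (mul_pos (mul_pos (hNpos (nk k)) (hbnpos k)) (hNpos (nk (k+1)))))]
      ring
    -- pass to the limit:  Ps * Rl = laml • Ps  (entrywise)
    have hPsR : ∀ i j, ∑ l, Ps i l * Rl l j = laml * Ps i j := by
      intro i j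
      have h1 : Tendsto (fun k => ∑ l, ((matEntrySumNorm (matProd A 0 (nk (φ k))))⁻¹ •
          matProd A 0 (nk (φ k))) i l * Rm (φ k) l j) atTop (nhds (∑ l, Ps i l * Rl l j)) :=
        tendsto_finset_sum _ fun l _ => (((hQe i l).comp hφtop).mul (hRe l j))
      have h2 : Tendsto (fun k => lam (φ k) * ((matEntrySumNorm (matProd A 0 (nk (φ k + 1))))⁻¹ •
          matProd A 0 (nk (φ k + 1))) i j) atTop (nhds (laml * Ps i j)) := by
        refine hlamconv.mul ((hQe i j).comp ?_)
        exact (tendsto_add_atTop_nat 1).comp hφtop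
      refine tendsto_nhds_unique (h1.congr fun k => ?_) h2
      have h3 := congrFun (congrFun (hQR (φ k)) i) j
      rw [Matrix.mul_apply] at h3
      rw [h3]
      rfl
    -- all nonzero rows of Ps are proportional
    obtain ⟨i0, hi0⟩ : ∃ i0, (Ps i0 : Fin d → ℝ) ≠ 0 := by
      by_contra h
      push_neg at h
      exact hPs0 (by ext i j; rw [congrFun (h i) j]; rfl)
    obtain ⟨j0, hj0⟩ : ∃ j0, 0 < Ps i0 j0 := by
      by_contra h
      push_neg at h
      exact hi0 (funext fun j => le_antisymm (h j) (hPsnn i0 j))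
    have hchainR' : ¬ ∃ i i' : Fin d, ∃ j j' : Fin d, i ≠ i' ∧ j ≠ j' ∧
        (Rl : Matrix (Fin d) (Fin d) ℝ) i j * Rl i' j' ≠ 0 ∧ Rl i j' = 0 ∧ Rl i' j = 0 := hchainR
    have hprop : ∀ i, (Ps i : Fin d → ℝ) ≠ 0 → ∃ t : ℝ, 0 < t ∧ (Ps i : Fin d → ℝ) = t • Ps i0 := by
      intro i hi
      exact Aux.eigen_unique (Matrix.of Rl) hRlnn hchainR' hlamlpos (Ps i0) (Ps i)
        (hPsnn i0) (hPsnn i) hi0 hi (hPsR i0) (hPsR i)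
    set tv : Fin d → ℝ := fun i => Ps i j0 / Ps i0 j0 with htv
    have hfact : ∀ i j, Ps i j = tv i * Ps i0 j := by
      intro i j
      by_cases h : (Ps i : Fin d → ℝ) = 0
      · rw [congrFun h j, htv]
        simp [congrFun h j0]
      · obtain ⟨s, hs, hsi⟩ := hprop i h
        have h1 : Ps i j = s * Ps i0 j := congrFun hsi j
        have h2 : Ps i j0 = s * Ps i0 j0 := congrFun hsi j0
        rw [h1, htv]
        simp only [h2]
        rw [mul_div_assoc, div_self (ne_of_gt hj0)]
        ring
    have htvnn : ∀ i, 0 ≤ tv i := fun i => div_nonneg (hPsnn i j0) hj0.le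
    have htv0 : tv ≠ 0 := by
      intro h
      have : tv i0 = 0 := congrFun h i0
      rw [htv] at this
      simp only [div_self (ne_of_gt hj0)] at this
      exact one_ne_zero this
    have htvpos : 0 < vecEntrySumNorm tv := Aux.vsn_pos htv0
    -- Ps acts as a rank-one operator
    have hPsmul : ∀ w : Fin d → ℝ, Ps *ᵥ w = (∑ j, Ps i0 j * w j) • tv := by
      intro w
      funext i
      have h1 : (Ps *ᵥ w) i = ∑ j, Ps i j * w j := rfl
      rw [h1]
      have h2 : ((∑ j, Ps i0 j * w j) • tv) i = (∑ j, Ps i0 j * w j) * tv i := rfl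
      rw [h2, Finset.sum_mul]
      refine Finset.sum_congr rfl fun j _ => ?_
      rw [hfact i j]
      ring
    -- distance of normalized products to Ps
    have hD0 : Tendsto (fun k => matEntrySumNorm
        ((matEntrySumNorm (matProd A 0 (nk k)))⁻¹ • matProd A 0 (nk k) - Ps)) atTop (nhds 0) := by
      have h1 : ∀ i j, Tendsto (fun k => |(((matEntrySumNorm (matProd A 0 (nk k)))⁻¹ •
          matProd A 0 (nk k)) - Ps) i j|) atTop (nhds 0) := by
        intro i j
        have h2 : Tendsto (fun k => ((matEntrySumNorm (matProd A 0 (nk k)))⁻¹ •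
            matProd A 0 (nk k)) i j - Ps i j) atTop (nhds (Ps i j - Ps i j)) :=
          (hQe i j).sub tendsto_const_nhds
        have h3 := h2.abs
        simp only [sub_self, abs_zero] at h3
        refine h3.congr fun k => ?_
        rw [Matrix.sub_apply]
      have h4 := tendsto_finset_sum (Finset.univ : Finset (Fin d))
        (fun i (_ : i ∈ Finset.univ) => tendsto_finset_sum (Finset.univ : Finset (Fin d))
          (fun j (_ : j ∈ Finset.univ) => h1 i j))
      unfold matEntrySumNorm
      simpa [matEntrySumNorm] using h4
    -- the index function K
    have hex : ∀ n : ℕ, ∃ m, n < nk (m + 1) := by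
      intro n
      exact ⟨n, lt_of_lt_of_le (Nat.lt_succ_self n) (hnk.le_apply)⟩
    set K : ℕ → ℕ := fun n => Nat.find (hex n) - 1 with hKdef
    have hKspec : ∀ n, nk 1 ≤ n → nk (K n + 1) ≤ n ∧ n < nk (K n + 2) := by
      intro n hn
      have h1 := Nat.find_spec (hex n)
      have hfind0 : Nat.find (hex n) ≠ 0 := by
        intro h
        rw [h] at h1
        exact absurd h1 (not_lt.mpr hn)
      constructor
      · have h2 := Nat.find_min (hex n) (show Nat.find (hex n) - 1 < Nat.find (hex n) by omega)
        have h3 : K n + 1 = Nat.find (hex n) - 1 + 1 := rfl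
        rw [h3]
        exact not_lt.mp h2
      · have h3 : K n + 2 = Nat.find (hex n) + 1 := by
          have : K n = Nat.find (hex n) - 1 := rfl
          omega
        rw [h3]
        exact h1
    have hKtop : Tendsto K atTop atTop := by
      rw [tendsto_atTop_atTop]
      intro j
      refine ⟨nk (j + 1), fun n hn => ?_⟩
      by_contra h
      push_neg at h
      have h2 : Nat.find (hex n) ≤ j := by
        have : K n = Nat.find (hex n) - 1 := rfl
        omega
      have h3 := Nat.find_spec (hex n)
      have h4 : nk (Nat.find (hex n) + 1) ≤ nk (j + 1) := hnk.monotone (by omega)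
      omega
    clear_value K
    -- conclusion
    refine ⟨(vecEntrySumNorm tv)⁻¹ • tv, ?_⟩
    intro c hc hcbd
    obtain ⟨εc, hεc, hcb⟩ := hcbd
    have hvsnc : 0 ≤ vecEntrySumNorm c := Aux.vsn_nonneg c
    rw [tendsto_iff_norm_sub_tendsto_zero]
    have hδpos : 0 < εc * ε / (vecEntrySumNorm c + 1) :=
      div_pos (mul_pos hεc hε) (by linarith)
    have hDK : Tendsto (fun n => matEntrySumNorm
        ((matEntrySumNorm (matProd A 0 (nk (K n))))⁻¹ • matProd A 0 (nk (K n)) - Ps))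
        atTop (nhds 0) := hD0.comp hKtop
    have hsmall : ∀ᶠ n in atTop, matEntrySumNorm
        ((matEntrySumNorm (matProd A 0 (nk (K n))))⁻¹ • matProd A 0 (nk (K n)) - Ps)
          < εc * ε / (vecEntrySumNorm c + 1) := hDK.eventually (gt_mem_nhds hδpos)
    apply squeeze_zero' (g := fun n => 2 * vecEntrySumNorm c / (εc * ε) * matEntrySumNorm
        ((matEntrySumNorm (matProd A 0 (nk (K n))))⁻¹ • matProd A 0 (nk (K n)) - Ps))
    · exact Filter.Eventually.of_forall (fun n => norm_nonneg _)
    · filter_upwards [eventually_ge_atTop (nk 1), hsmall] with n hn1 hnD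
      obtain ⟨hk1, hk2⟩ := hKspec n hn1
      set k := K n with hkdef
      clear_value k
      have hknk : nk k ≤ n := le_trans (hnkle k) hk1
      have hEpos : 0 < matEntrySumNorm (matProd A (nk k) n) := hBpos k n hknk
      set w : Fin d → ℝ := matProd A (nk k) n *ᵥ c with hw
      have hwnn : ∀ i, 0 ≤ w i := by
        intro i
        show (0:ℝ) ≤ ∑ j, matProd A (nk k) n i j * c j
        exact Finset.sum_nonneg fun j _ => mul_nonneg (hPnn _ _ i j) (hc j)
      clear_value w
      have hsplit : matProd A 0 n = matProd A 0 (nk k) * matProd A (nk k) n :=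
        (Aux.matProd_mul A (Nat.zero_le _) hknk).symm
      have hPnc : matProd A 0 n *ᵥ c = matProd A 0 (nk k) *ᵥ w := by
        rw [hsplit, hw]
        exact (mulVec_mulVec c _ _).symm
      set a : Fin d → ℝ := ((matEntrySumNorm (matProd A 0 (nk k)))⁻¹ • matProd A 0 (nk k)) *ᵥ w
        with hadef
      have haeq : a = (matEntrySumNorm (matProd A 0 (nk k)))⁻¹ • (matProd A 0 (nk k) *ᵥ w) := by
        rw [hadef]
        exact smul_mulVec _ _ _
      clear_value a
      have hnorm_eq : (vecEntrySumNorm (matProd A 0 n *ᵥ c))⁻¹ • (matProd A 0 n *ᵥ c)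
          = (vecEntrySumNorm a)⁻¹ • a := by
        rw [hPnc]
        have h5 : matProd A 0 (nk k) *ᵥ w = (matEntrySumNorm (matProd A 0 (nk k))) • a := by
          rw [haeq, smul_smul, mul_inv_cancel₀ (ne_of_gt (hNpos (nk k))), one_smul]
        rw [h5, Aux.normalized_smul (hNpos (nk k))]
      have hvsn_a : vecEntrySumNorm a
          = (matEntrySumNorm (matProd A 0 (nk k)))⁻¹ * vecEntrySumNorm (matProd A 0 n *ᵥ c) := by
        rw [haeq, Aux.vsn_smul, abs_of_pos (inv_pos.mpr (hNpos (nk k))), hPnc]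
      have h1 : εc * matEntrySumNorm (matProd A 0 n) ≤ vecEntrySumNorm (matProd A 0 n *ᵥ c) :=
        (le_div_iff₀ (hNpos n)).mp (hcb n)
      have h2 : ε * (matEntrySumNorm (matProd A 0 (nk k)) * matEntrySumNorm (matProd A (nk k) n))
          ≤ matEntrySumNorm (matProd A 0 n) :=
        (le_div_iff₀ (mul_pos (hNpos (nk k)) hEpos)).mp (hH1 k n hk1 hk2)
      have ha_lb : εc * ε * matEntrySumNorm (matProd A (nk k) n) ≤ vecEntrySumNorm a := by
        have h4 : matEntrySumNorm (matProd A 0 (nk k)) *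
            (εc * ε * matEntrySumNorm (matProd A (nk k) n))
            ≤ vecEntrySumNorm (matProd A 0 n *ᵥ c) := by
          have h5 := mul_le_mul_of_nonneg_left h2 hεc.le
          have heq : matEntrySumNorm (matProd A 0 (nk k)) *
              (εc * ε * matEntrySumNorm (matProd A (nk k) n))
              = εc * (ε * (matEntrySumNorm (matProd A 0 (nk k)) *
                matEntrySumNorm (matProd A (nk k) n))) := by ring
          rw [heq]
          linarith [h5, h1]
        calc εc * ε * matEntrySumNorm (matProd A (nk k) n)
            = (matEntrySumNorm (matProd A 0 (nk k)))⁻¹ * (matEntrySumNorm (matProd A 0 (nk k)) *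
              (εc * ε * matEntrySumNorm (matProd A (nk k) n))) := by
              rw [← mul_assoc, inv_mul_cancel₀ (ne_of_gt (hNpos (nk k))), one_mul]
          _ ≤ (matEntrySumNorm (matProd A 0 (nk k)))⁻¹ * vecEntrySumNorm (matProd A 0 n *ᵥ c) :=
              mul_le_mul_of_nonneg_left h4 (inv_nonneg.mpr (hNpos (nk k)).le)
          _ = vecEntrySumNorm a := hvsn_a.symm
      have ha_pos : 0 < vecEntrySumNorm a :=
        lt_of_lt_of_le (mul_pos (mul_pos hεc hε) hEpos) ha_lb
      set b : Fin d → ℝ := Ps *ᵥ w with hbdef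
      clear_value b
      have hDnn : 0 ≤ matEntrySumNorm
          ((matEntrySumNorm (matProd A 0 (nk k)))⁻¹ • matProd A 0 (nk k) - Ps) :=
        Aux.esn_nonneg _
      have hab : vecEntrySumNorm (a - b) ≤ matEntrySumNorm
          ((matEntrySumNorm (matProd A 0 (nk k)))⁻¹ • matProd A 0 (nk k) - Ps) *
          (matEntrySumNorm (matProd A (nk k) n) * vecEntrySumNorm c) := by
        have h6 : a - b = (((matEntrySumNorm (matProd A 0 (nk k)))⁻¹ • matProd A 0 (nk k)) - Ps) *ᵥ w := by
          rw [hadef, hbdef, sub_mulVec]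
        rw [h6]
        refine le_trans (Aux.vsn_mulVec_le _ _) ?_
        refine mul_le_mul_of_nonneg_left ?_ hDnn
        rw [hw]
        exact Aux.vsn_mulVec_le _ _
      have hDsmall : matEntrySumNorm
          ((matEntrySumNorm (matProd A 0 (nk k)))⁻¹ • matProd A 0 (nk k) - Ps) *
          vecEntrySumNorm c < εc * ε := by
        have h7 := (lt_div_iff₀ (show (0:ℝ) < vecEntrySumNorm c + 1 by linarith)).mp hnD
        have h8 : matEntrySumNorm
            ((matEntrySumNorm (matProd A 0 (nk k)))⁻¹ • matProd A 0 (nk k) - Ps) *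
            vecEntrySumNorm c ≤ matEntrySumNorm
            ((matEntrySumNorm (matProd A 0 (nk k)))⁻¹ • matProd A 0 (nk k) - Ps) *
            (vecEntrySumNorm c + 1) :=
          mul_le_mul_of_nonneg_left (by linarith) hDnn
        linarith [h7, h8]
      have hb_pos : 0 < vecEntrySumNorm b := by
        have h8 := Aux.vsn_sub_le a b
        have h9 := mul_lt_mul_of_pos_right hDsmall hEpos
        linarith [hab, ha_lb, h8, h9]
      have hbne : b ≠ 0 := by
        intro h
        rw [h] at hb_pos
        simp [vecEntrySumNorm] at hb_pos
      have hbs : b = (∑ j, Ps i0 j * w j) • tv := by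
        rw [hbdef]
        exact hPsmul w
      have hs_nn : 0 ≤ ∑ j, Ps i0 j * w j :=
        Finset.sum_nonneg fun j _ => mul_nonneg (hPsnn i0 j) (hwnn j)
      have hs_pos : 0 < ∑ j, Ps i0 j * w j := by
        rcases eq_or_lt_of_le hs_nn with h | h
        · exfalso
          apply hbne
          rw [hbs, ← h, zero_smul]
        · exact h
      have hLb : (vecEntrySumNorm b)⁻¹ • b = (vecEntrySumNorm tv)⁻¹ • tv := by
        rw [hbs]
        exact Aux.normalized_smul hs_pos tv
      rw [hnorm_eq, ← hLb]
      have hy : ∀ y : Fin d → ℝ, ‖y‖ ≤ vecEntrySumNorm y := by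
        intro y
        rw [pi_norm_le_iff_of_nonneg (Aux.vsn_nonneg y)]
        intro i
        rw [Real.norm_eq_abs]
        exact Aux.entry_le_vsn y i
      calc ‖(vecEntrySumNorm a)⁻¹ • a - (vecEntrySumNorm b)⁻¹ • b‖
          ≤ vecEntrySumNorm ((vecEntrySumNorm a)⁻¹ • a - (vecEntrySumNorm b)⁻¹ • b) := hy _
        _ ≤ 2 * vecEntrySumNorm (a - b) / vecEntrySumNorm a := Aux.ratio_bound a b ha_pos hb_pos
        _ ≤ 2 * (matEntrySumNorm
              ((matEntrySumNorm (matProd A 0 (nk k)))⁻¹ • matProd A 0 (nk k) - Ps) *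
              (matEntrySumNorm (matProd A (nk k) n) * vecEntrySumNorm c)) /
            (εc * ε * matEntrySumNorm (matProd A (nk k) n)) := by
            refine div_le_div₀ (by positivity) (by linarith [hab]) (mul_pos (mul_pos hεc hε) hEpos) ha_lb
        _ = 2 * vecEntrySumNorm c / (εc * ε) * matEntrySumNorm
              ((matEntrySumNorm (matProd A 0 (nk k)))⁻¹ • matProd A 0 (nk k) - Ps) := by
            field_simp
    · have h10 := hDK.const_mul (2 * vecEntrySumNorm c / (εc * ε))
      simpa using h10
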